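/- There is a p-morphism from the bitopological product 𝔛 × 𝒴 onto Top₂(𝕋_{2,2+2}): the map f defined by f(⟨α,0⟩, β) = ⟨g(α,β), root⟩ and, for n ≥ 1, f(⟨α,n⟩, β) = ⟨g(α↾_n·0^ω, β↾_n·0^ω), f_ω(γ)⟩ where β = β↾_n · γ, is surjective, open and continuous from the horizontal topology of 𝔛 × 𝒴 to the Alexandrov topology T_{R₁′}, and open and continuous from the vertical topology of 𝔛 × 𝒴 to the Alexandrov topology T_{R₂′}. -/

import Mathlib

/- ============== Formulas ============== -/

/-- Unimodal formulas. -/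
inductive MForm : Type
  | var : ℕ → MForm
  | bot : MForm
  | imp : MForm → MForm → MForm
  | box : MForm → MForm

namespace MForm
def neg (A : MForm) : MForm := A.imp .bot
def dia (A : MForm) : MForm := (MForm.box A.neg).neg
def subst (σ : ℕ → MForm) : MForm → MForm
  | var n => σ n
  | bot => bot
  | imp A B => (subst σ A).imp (subst σ B)
  | box A => MForm.box (subst σ A)
end MForm

/-- Bimodal formulas (`box 0` is □₁ and `box 1` is □₂). -/
inductive BForm : Type
  | var : ℕ → BForm
  | bot : BForm
  | imp : BForm → BForm → BForm
  | box : Fin 2 → BForm → BForm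

namespace BForm
def neg (A : BForm) : BForm := A.imp .bot
def dia (i : Fin 2) (A : BForm) : BForm := (BForm.box i A.neg).neg
def subst (σ : ℕ → BForm) : BForm → BForm
  | var n => σ n
  | bot => bot
  | imp A B => (subst σ A).imp (subst σ B)
  | box i A => BForm.box i (subst σ A)
end BForm

/-- Translation of a unimodal formula into the bimodal language,
reading □ as □ᵢ. -/
def MForm.toB (i : Fin 2) : MForm → BForm
  | .var n => .var n
  | .bot => .bot
  | .imp A B => (MForm.toB i A).imp (MForm.toB i B)
  | .box A => BForm.box i (MForm.toB i A)

/- ============== Normal modal logics ============== -/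

/-- Provability in the smallest normal unimodal logic containing the axioms `Ax`:
classical tautologies (via a Hilbert axiomatization), the normality axiom,
modus ponens, necessitation and uniform substitution. -/
inductive MProv (Ax : Set MForm) : MForm → Prop
  | axm {A : MForm} : A ∈ Ax → MProv Ax A
  | pl1 {A B : MForm} : MProv Ax (A.imp (B.imp A))
  | pl2 {A B C : MForm} : MProv Ax ((A.imp (B.imp C)).imp ((A.imp B).imp (A.imp C)))
  | pl3 {A : MForm} : MProv Ax ((A.neg.neg).imp A)
  | kax {A B : MForm} : MProv Ax ((MForm.box (A.imp B)).imp ((MForm.box A).imp (MForm.box B)))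
  | mp {A B : MForm} : MProv Ax (A.imp B) → MProv Ax A → MProv Ax B
  | nec {A : MForm} : MProv Ax A → MProv Ax (MForm.box A)
  | subst {A : MForm} (σ : ℕ → MForm) : MProv Ax A → MProv Ax (A.subst σ)

/-- Provability in the smallest normal bimodal logic containing the axioms `Ax`. -/
inductive BProv (Ax : Set BForm) : BForm → Prop
  | axm {A : BForm} : A ∈ Ax → BProv Ax A
  | pl1 {A B : BForm} : BProv Ax (A.imp (B.imp A))
  | pl2 {A B C : BForm} : BProv Ax ((A.imp (B.imp C)).imp ((A.imp B).imp (A.imp C)))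
  | pl3 {A : BForm} : BProv Ax ((A.neg.neg).imp A)
  | kax (i : Fin 2) {A B : BForm} :
      BProv Ax ((BForm.box i (A.imp B)).imp ((BForm.box i A).imp (BForm.box i B)))
  | mp {A B : BForm} : BProv Ax (A.imp B) → BProv Ax A → BProv Ax B
  | nec (i : Fin 2) {A : BForm} : BProv Ax A → BProv Ax (BForm.box i A)
  | subst {A : BForm} (σ : ℕ → BForm) : BProv Ax A → BProv Ax (A.subst σ)

/-- The propositional letter p. -/
def pM : MForm := .var 0

/-- Axioms of S4 : □p→p and □p→□□p. -/
def S4Ax : Set MForm := {(MForm.box pM).imp pM, (MForm.box pM).imp (MForm.box (MForm.box pM))}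

/-- The McKinsey axiom □◇p→◇□p. -/
def McKM : MForm := (MForm.box pM.dia).imp (MForm.box pM).dia

/-- The logic S4. -/
def S4L : Set MForm := {A | MProv S4Ax A}

/-- The logic S4.1 = S4 + McKinsey. -/
def S41L : Set MForm := {A | MProv (S4Ax ∪ {McKM}) A}

/-- Axioms of the fusion S4.1 ∗ S4 : all theorems of S4.1 read with □₁ together
with all theorems of S4 read with □₂. -/
def FusionAx : Set BForm := (MForm.toB 0 '' S41L) ∪ (MForm.toB 1 '' S4L)

/-- The fusion S4.1 ∗ S4 (as a normal bimodal logic). -/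
def FusionL : Set BForm := {A | BProv FusionAx A}

def pB : BForm := .var 0

/-- The formula ◇₁□₂(◇₁p → □₁p). -/
def MKB : BForm := BForm.dia 0 (BForm.box 1 ((BForm.dia 0 pB).imp (BForm.box 0 pB)))

/-- The logic L = S4.1 ∗ S4 + ◇₁□₂(◇₁p → □₁p). -/
def LL : Set BForm := {A | BProv (FusionAx ∪ {MKB}) A}

/- ============== Kripke semantics ============== -/

/-- Truth of a bimodal formula at a point of a Kripke 2-frame `(W, R 0, R 1)`
under valuation `V`. -/
def BSat {W : Type} (R : Fin 2 → W → W → Prop) (V : ℕ → W → Prop) : W → BForm → Prop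
  | x, .var n => V n x
  | _, .bot => False
  | x, .imp A B => BSat R V x A → BSat R V x B
  | x, .box i A => ∀ y, R i x y → BSat R V y A

/-- Frame validity for bimodal formulas. -/
def BValid {W : Type} (R : Fin 2 → W → W → Prop) (A : BForm) : Prop :=
  ∀ (V : ℕ → W → Prop) (x : W), BSat R V x A

/-- Truth of a unimodal formula at a point of a Kripke frame. -/
def MKSat {W : Type} (R : W → W → Prop) (V : ℕ → W → Prop) : W → MForm → Prop
  | x, .var n => V n x
  | _, .bot => False
  | x, .imp A B => MKSat R V x A → MKSat R V x B
  | x, .box A => ∀ y, R x y → MKSat R V y A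

/-- Frame validity for unimodal formulas. -/
def MKValid {W : Type} (R : W → W → Prop) (A : MForm) : Prop :=
  ∀ (V : ℕ → W → Prop) (x : W), MKSat R V x A

/- ============== Topological semantics ============== -/

/-- Topological truth of a unimodal formula: □A holds at `x` iff some open
neighbourhood of `x` satisfies `A` everywhere. -/
def MTSat {X : Type} (t : TopologicalSpace X) (V : ℕ → X → Prop) : X → MForm → Prop
  | x, .var n => V n x
  | _, .bot => False
  | x, .imp A B => MTSat t V x A → MTSat t V x B
  | x, .box A => ∃ U : Set X, t.IsOpen U ∧ x ∈ U ∧ ∀ y ∈ U, MTSat t V y A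

/-- Topological validity for unimodal formulas. -/
def MTValid {X : Type} (t : TopologicalSpace X) (A : MForm) : Prop :=
  ∀ (V : ℕ → X → Prop) (x : X), MTSat t V x A

/-- Bitopological truth of a bimodal formula: □ᵢ is interpreted via the
topology `t i`. -/
def BTSat {X : Type} (t : Fin 2 → TopologicalSpace X) (V : ℕ → X → Prop) : X → BForm → Prop
  | x, .var n => V n x
  | _, .bot => False
  | x, .imp A B => BTSat t V x A → BTSat t V x B
  | x, .box i A => ∃ U : Set X, (t i).IsOpen U ∧ x ∈ U ∧ ∀ y ∈ U, BTSat t V y A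

/-- Bitopological validity for bimodal formulas. -/
def BTValid {X : Type} (t : Fin 2 → TopologicalSpace X) (A : BForm) : Prop :=
  ∀ (V : ℕ → X → Prop) (x : X), BTSat t V x A

/-- The horizontal topology on `X × Y`: generated by the base
`{U × {y} : U open in X, y ∈ Y}`. -/
def horiz {X Y : Type} (t : TopologicalSpace X) : TopologicalSpace (X × Y) :=
  TopologicalSpace.generateFrom
    {S | ∃ (U : Set X) (y : Y), t.IsOpen U ∧ S = U ×ˢ ({y} : Set Y)}

/-- The vertical topology on `X × Y`: generated by the base
`{{x} × U : x ∈ X, U open in Y}`. -/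
def vert {X Y : Type} (t : TopologicalSpace Y) : TopologicalSpace (X × Y) :=
  TopologicalSpace.generateFrom
    {S | ∃ (x : X) (U : Set Y), t.IsOpen U ∧ S = ({x} : Set X) ×ˢ U}

/-- The topological product `L₁ ×ₜ L₂` of two unimodal logics: the set of all
bimodal formulas valid in every bitopological product `𝔛₁ × 𝔛₂` of (nonempty)
topological spaces with `𝔛₁ ⊨ L₁` and `𝔛₂ ⊨ L₂`. -/
def TopProdLogic (L1 L2 : Set MForm) : Set BForm :=
  {A | ∀ (X Y : Type) (t1 : TopologicalSpace X) (t2 : TopologicalSpace Y),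
      Nonempty X → Nonempty Y →
      (∀ B ∈ L1, MTValid t1 B) → (∀ B ∈ L2, MTValid t2 B) →
      BTValid ![horiz t1, vert t2] A}

/-- The Alexandrov topology of a (reflexive transitive) relation `R`:
the topology with base `{R(x) : x ∈ W}`. -/
def alexandrov {W : Type} (R : W → W → Prop) : TopologicalSpace W :=
  TopologicalSpace.generateFrom {S | ∃ x, S = {t | R x t}}

/-- A space is weakly scattered if every nonempty open set contains an
isolated point. -/
def WeaklyScattered {X : Type} (t : TopologicalSpace X) : Prop :=
  ∀ U : Set X, t.IsOpen U → U.Nonempty → ∃ x ∈ U, t.IsOpen ({x} : Set X)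

/-- p-morphism between Kripke 1-frames. -/
def IsPMorphism {W U : Type} (R : W → W → Prop) (S : U → U → Prop) (f : W → U) : Prop :=
  Function.Surjective f ∧ (∀ x y, R x y → S (f x) (f y)) ∧
    (∀ x u, S (f x) u → ∃ y, R x y ∧ f y = u)

/-- p-morphism between Kripke 2-frames. -/
def IsPMorphism2 {W U : Type} (R1 R2 : W → W → Prop) (S1 S2 : U → U → Prop)
    (f : W → U) : Prop :=
  Function.Surjective f ∧
    (∀ x y, R1 x y → S1 (f x) (f y)) ∧ (∀ x u, S1 (f x) u → ∃ y, R1 x y ∧ f y = u) ∧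
    (∀ x y, R2 x y → S2 (f x) (f y)) ∧ (∀ x u, S2 (f x) u → ∃ y, R2 x y ∧ f y = u)

/- ============== The frames 𝕋₂,₂ and 𝕋₂,₂₊₂ ============== -/

/-- The four-letter alphabet {a₁,a₂,b₁,b₂}: `(false, i)` is the a-letter `aᵢ₊₁`
and `(true, i)` is the b-letter `bᵢ₊₁`. -/
abbrev Letter : Type := Bool × Fin 2

/-- `T₂,₂ = {a₁,a₂,b₁,b₂}*`. -/
abbrev T22 : Type := List Letter

/-- `T₂ = {1,2}*`. -/
abbrev T2W : Type := List (Fin 2)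

/-- First relation of `𝕋₂,₂`: append a word over the a-letters. -/
def R1T (w w' : T22) : Prop := ∃ c : T22, (∀ l ∈ c, l.1 = false) ∧ w' = w ++ c

/-- Second relation of `𝕋₂,₂`: append a word over the b-letters. -/
def R2T (w w' : T22) : Prop := ∃ d : T22, (∀ l ∈ d, l.1 = true) ∧ w' = w ++ d

/-- The carrier of `𝕋₂,₂₊₂` : `⟨a, root⟩` is encoded as `(a, none)` and
`⟨a, b⟩` with `b ∈ T₂` as `(a, some b)`. -/
abbrev W222 : Type := T22 × Option T2W

/-- Generators of `R₁′`. -/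
def R1'gen : W222 → W222 → Prop := fun x y =>
  (∃ a a', R1T a a' ∧ x = (a, none) ∧ y = (a', none)) ∨
  (∃ a, x = (a, none) ∧ y = (a, some ([] : T2W)))

/-- `R₁′`: smallest reflexive transitive relation containing the generators. -/
def R1' : W222 → W222 → Prop := Relation.ReflTransGen R1'gen

/-- Generators of `R₂′`. -/
def R2'gen : W222 → W222 → Prop := fun x y =>
  (∃ a a', R2T a a' ∧ x = (a, none) ∧ y = (a', none)) ∨
  (∃ a b b', b <+: b' ∧ x = (a, some b) ∧ y = (a, some b'))

/-- `R₂′`: smallest reflexive transitive relation containing the generators. -/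
def R2' : W222 → W222 → Prop := Relation.ReflTransGen R2'gen

/- ============== Pseudo-infinite paths and the spaces 𝒴 and 𝔛 ============== -/

/-- Infinite sequences over {0,1,2}: `none` encodes 0 and `some i` encodes
`i+1 ∈ {1,2}`. -/
abbrev Seq3 : Type := ℕ → Option (Fin 2)

/-- `W_ω`: pseudo-infinite paths, i.e. sequences with finitely many nonzero
entries. -/
def Wom : Type := {s : Seq3 // {k | s k ≠ none}.Finite}

/-- `st(s)`: the least `N` such that all entries from `N` on are zero. -/
noncomputable def stN {γ : Type} (s : ℕ → Option γ) : ℕ :=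
  sInf {N | ∀ k, N ≤ k → s k = none}

/-- The first `k` entries of a sequence, as a finite word. -/
def takeSeq {γ : Type} (s : ℕ → Option γ) (k : ℕ) : List (Option γ) :=
  List.ofFn (fun i : Fin k => s i.1)

/-- `f_F`: delete all zeros from a finite word. -/
def fF {γ : Type} (l : List (Option γ)) : List γ := l.filterMap id

/-- `f_ω`: delete the zeros from a pseudo-infinite path, producing a finite word. -/
noncomputable def squash {γ : Type} (s : ℕ → Option γ) : List γ := fF (takeSeq s (stN s))

/-- The basic set `U_k(α) = {β ∈ W_ω : α↾k = β↾k and f_F(α↾k) ⊑ f_ω(β)}`. -/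
def Uset (α : Wom) (k : ℕ) : Set Wom :=
  {β | takeSeq β.1 k = takeSeq α.1 k ∧ fF (takeSeq α.1 k) <+: squash β.1}

/-- The topology `T_ω` on `W_ω` generated by the base `{U_k(α) : k > 0}`;
`𝒴 = (W_ω, T_ω)`. -/
def Tom : TopologicalSpace Wom :=
  TopologicalSpace.generateFrom {S | ∃ α k, 0 < k ∧ S = Uset α k}

/-- The basic sets of the space `𝔛`:
`U′_k(α,0) = (U_k(α) × {0}) ∪ (U_k(α) × {n ≥ k})` and `U′_k(α,n) = {⟨α,n⟩}`
for `n ≥ 1`. -/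
def U'set (α : Wom) (k n : ℕ) : Set (Wom × ℕ) :=
  if n = 0 then (Uset α k ×ˢ ({0} : Set ℕ)) ∪ (Uset α k ×ˢ {m : ℕ | k ≤ m})
  else {(α, n)}

/-- The topology of the space `𝔛 = (W_ω × ℕ, T)`. -/
def TX : TopologicalSpace (Wom × ℕ) :=
  TopologicalSpace.generateFrom {S | ∃ α k n, S = U'set α k n}

/-- Interleaving of two paths: the sequence `a_{x₁} b_{y₁} a_{x₂} b_{y₂} …`
(with `a₀ = b₀ = 0`). -/
def interleave (α β : Seq3) : ℕ → Option Letter := fun n =>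
  if n % 2 = 0 then (α (n / 2)).map (fun v => ((false, v) : Letter))
  else (β (n / 2)).map (fun v => ((true, v) : Letter))

/-- The map `g : W_ω × W_ω → T₂,₂` obtained by interleaving and deleting zeros. -/
noncomputable def gmap (α β : Seq3) : T22 := squash (interleave α β)

/-- `g` as a map on pairs. -/
noncomputable def gPair : Wom × Wom → T22 := fun q => gmap q.1.1 q.2.1

/-- `s↾n · 0^ω`. -/
def truncSeq (s : Seq3) (n : ℕ) : Seq3 := fun k => if k < n then s k else none

/-- The tail `γ` of `s = s↾n · γ`. -/
def shiftSeq (s : Seq3) (n : ℕ) : Seq3 := fun k => s (n + k)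

/-- The map `f : 𝔛 × 𝒴 → 𝕋₂,₂₊₂` :
`f(⟨α,0⟩,β) = ⟨g(α,β), root⟩` and for `n ≥ 1`,
`f(⟨α,n⟩,β) = ⟨g(α↾n·0^ω, β↾n·0^ω), f_ω(γ)⟩` where `β = β↾n·γ`. -/
noncomputable def fXY : (Wom × ℕ) × Wom → W222 := fun q =>
  if q.1.2 = 0 then (gmap q.1.1.1 q.2.1, none)
  else (gmap (truncSeq q.1.1.1 q.1.2) (truncSeq q.2.1 q.1.2),
        some (squash (shiftSeq q.2.1 q.1.2)))

/-- An effective encoding of bimodal formulas by natural numbers. -/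
def encodeB : BForm → ℕ
  | .var n => Nat.pair 0 n
  | .bot => Nat.pair 1 0
  | .imp A B => Nat.pair 2 (Nat.pair (encodeB A) (encodeB B))
  | .box i A => Nat.pair 3 (Nat.pair i.1 (encodeB A))

section A
variable {γ : Type}

lemma takeSeq_succ (s : ℕ → Option γ) (n : ℕ) :
    takeSeq s (n+1) = takeSeq s n ++ [s n] := by
  rw [takeSeq, List.ofFn_succ', List.concat_eq_append]
  rfl

lemma takeSeq_add (s : ℕ → Option γ) (m n : ℕ) :
    takeSeq s (m + n) = takeSeq s m ++ takeSeq (fun j => s (m + j)) n := by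
  induction n with
  | zero => simp [takeSeq]
  | succ n ih =>
    rw [show m + (n+1) = (m+n)+1 by omega, takeSeq_succ, ih, takeSeq_succ, List.append_assoc]

lemma fF_append (l1 l2 : List (Option γ)) : fF (l1 ++ l2) = fF l1 ++ fF l2 :=
  List.filterMap_append

lemma takeSeq_eq_iff (s t : ℕ → Option γ) (k : ℕ) :
    takeSeq s k = takeSeq t k ↔ ∀ i, i < k → s i = t i := by
  rw [takeSeq, takeSeq, List.ofFn_inj]
  constructor
  · intro h i hi; exact congrFun h ⟨i, hi⟩
  · intro h; funext i; exact h i.1 i.2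

lemma fF_take_stable (s : ℕ → Option γ) {N M : ℕ} (h : N ≤ M)
    (h0 : ∀ k, N ≤ k → s k = none) : fF (takeSeq s M) = fF (takeSeq s N) := by
  obtain ⟨d, rfl⟩ := Nat.exists_eq_add_of_le h
  rw [takeSeq_add, fF_append]
  have : fF (takeSeq (fun j => s (N+j)) d) = [] := by
    rw [fF, List.filterMap_eq_nil_iff]
    intro a ha
    rw [takeSeq, List.mem_ofFn] at ha
    obtain ⟨i, rfl⟩ := ha
    simp [h0 (N + i.1) (by omega)]
  rw [this, List.append_nil]

lemma squash_eq (s : ℕ → Option γ) (N : ℕ) (h : ∀ k, N ≤ k → s k = none) :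
    squash s = fF (takeSeq s N) := by
  have h1 : stN s ≤ N := Nat.sInf_le h
  have h2 : ∀ k, stN s ≤ k → s k = none :=
    Nat.sInf_mem (s := {N | ∀ k, N ≤ k → s k = none}) ⟨N, h⟩
  rw [squash, ← fF_take_stable s h1 h2]

lemma squash_none (s : ℕ → Option γ) (h : ∀ k, s k = none) : squash s = [] := by
  rw [squash_eq s 0 (fun k _ => h k)]; simp [takeSeq, fF]

lemma fF_take_prefix (s : ℕ → Option γ) {k k' : ℕ} (h : k ≤ k') :
    fF (takeSeq s k) <+: fF (takeSeq s k') := by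
  obtain ⟨d, rfl⟩ := Nat.exists_eq_add_of_le h
  rw [takeSeq_add, fF_append]
  exact List.prefix_append _ _

lemma bound_of_finite {s : ℕ → Option γ} (h : {k | s k ≠ none}.Finite) :
    ∃ N, ∀ k, N ≤ k → s k = none := by
  obtain ⟨N, hN⟩ := h.bddAbove
  refine ⟨N + 1, fun k hk => ?_⟩
  by_contra hne
  have := hN (Set.mem_setOf.mpr hne)
  omega

lemma fF_take_prefix_squash (s : ℕ → Option γ) (h : {k | s k ≠ none}.Finite) (k : ℕ) :
    fF (takeSeq s k) <+: squash s := by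
  obtain ⟨N, hN⟩ := bound_of_finite h
  rw [squash_eq s (max k N) (fun j hj => hN j (le_trans (le_max_right _ _) hj))]
  exact fF_take_prefix s (le_max_left _ _)

lemma squash_split (s : Seq3) (h : {k | s k ≠ none}.Finite) (n : ℕ) :
    squash s = fF (takeSeq s n) ++ squash (shiftSeq s n) := by
  obtain ⟨N, hN⟩ := bound_of_finite h
  have hb : ∀ k, n + (max N n - n) ≤ k → s k = none := fun k hk =>
    hN k (by omega)
  rw [squash_eq s (n + (max N n - n)) hb, takeSeq_add, fF_append]
  congr 1
  have : ∀ k, (max N n - n) ≤ k → shiftSeq s n k = none := fun k hk =>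
    hN (n + k) (by omega)
  rw [squash_eq (shiftSeq s n) _ this]
  rfl

lemma squash_list (l : List γ) : squash (fun k => l[k]?) = l := by
  rw [squash_eq _ l.length (fun k hk => List.getElem?_eq_none hk)]
  have : takeSeq (fun k => l[k]?) l.length = l.map some := by
    rw [takeSeq]
    have : (fun i : Fin l.length => l[i.1]?) = fun i : Fin l.length => some l[i.1] := by
      funext i; exact List.getElem?_eq_getElem i.2
    rw [this]
    rw [show (fun i : Fin l.length => some l[i.1]) = some ∘ (fun i : Fin l.length => l[i.1]) from rfl]
    rw [← List.map_ofFn, List.ofFn_getElem]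
  rw [this, fF, List.filterMap_map]
  simp

end A

section B

lemma fF_pairs (w : List Letter) (s : ℕ → Option Letter)
    (h : ∀ (i : ℕ) (hi : i < w.length),
      (s (2*i) = some w[i] ∧ s (2*i+1) = none) ∨ (s (2*i) = none ∧ s (2*i+1) = some w[i])) :
    fF (takeSeq s (2 * w.length)) = w := by
  induction w using List.reverseRecOn with
  | nil => simp [takeSeq, fF]
  | append_singleton w' a ih =>
    have hlen : 2 * (w' ++ [a]).length = 2 * w'.length + 1 + 1 := by
      simp [List.length_append]; omega
    rw [hlen, takeSeq_succ, takeSeq_succ, fF_append, fF_append]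
    have hlt : w'.length < (w' ++ [a]).length := by simp
    have hw' : fF (takeSeq s (2 * w'.length)) = w' := by
      apply ih
      intro i hi
      have hi' : i < (w' ++ [a]).length := by simp; omega
      have := h i hi'
      rwa [List.getElem_append_left hi] at this
    have ha := h w'.length hlt
    rw [List.getElem_concat_length (l := w') (a := a) rfl] at ha
    rw [hw']
    rcases ha with ⟨h1, h2⟩ | ⟨h1, h2⟩ <;> simp [fF, h1, h2]

lemma interleave_eventually_none {α β : Seq3} {N : ℕ}
    (ha : ∀ k, N ≤ k → α k = none) (hb : ∀ k, N ≤ k → β k = none) :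
    ∀ k, 2 * N ≤ k → interleave α β k = none := by
  intro k hk
  have hdiv : N ≤ k / 2 := by omega
  rw [interleave]
  split
  · rw [ha _ hdiv]; rfl
  · rw [hb _ hdiv]; rfl

lemma gmap_concat (α β α' β' : Seq3) (N L : ℕ)
    (ha : ∀ k, k < N → α' k = α k) (hb : ∀ k, k < N → β' k = β k)
    (ha0 : ∀ k, N ≤ k → α k = none) (hb0 : ∀ k, N ≤ k → β k = none)
    (ha0' : ∀ k, N + L ≤ k → α' k = none) (hb0' : ∀ k, N + L ≤ k → β' k = none) :
    gmap α' β' = gmap α β ++ fF (takeSeq (fun j => interleave α' β' (2*N + j)) (2*L)) := by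
  have hil : ∀ k, 2*N ≤ k → interleave α β k = none := interleave_eventually_none ha0 hb0
  have hil' : ∀ k, 2*N + 2*L ≤ k → interleave α' β' k = none := by
    intro k hk
    exact interleave_eventually_none ha0' hb0' k (by omega)
  have e1 : gmap α β = fF (takeSeq (interleave α β) (2*N)) := squash_eq _ _ hil
  have e2 : gmap α' β' = fF (takeSeq (interleave α' β') (2*N + 2*L)) := squash_eq _ _ hil'
  rw [e1, e2, takeSeq_add, fF_append]
  congr 2
  rw [takeSeq_eq_iff]
  intro i hi
  have hdiv : i / 2 < N := by omega
  rw [interleave, interleave]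
  split
  · rw [ha _ hdiv]
  · rw [hb _ hdiv]

lemma gmap_append_awords (α β α' : Seq3) (N : ℕ)
    (ha : ∀ k, k < N → α' k = α k)
    (ha0 : ∀ k, N ≤ k → α k = none) (hb0 : ∀ k, N ≤ k → β k = none)
    (hfin : {k | α' k ≠ none}.Finite) :
    ∃ cs, (∀ l ∈ cs, l.1 = false) ∧ gmap α' β = gmap α β ++ cs := by
  obtain ⟨M, hM⟩ := bound_of_finite hfin
  refine ⟨_, ?_, gmap_concat α β α' β N M ha (fun _ _ => rfl) ha0 hb0
    (fun k hk => hM k (by omega)) (fun k hk => hb0 k (by omega))⟩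
  intro l hl
  rw [fF, List.mem_filterMap] at hl
  obtain ⟨e, he, hid⟩ := hl
  rw [takeSeq, List.mem_ofFn] at he
  obtain ⟨i, rfl⟩ := he
  simp only [id_eq, interleave] at hid
  by_cases hpar : (2*N + i.1) % 2 = 0
  · rw [if_pos hpar] at hid
    rw [Option.map_eq_some_iff] at hid
    obtain ⟨v, _, rfl⟩ := hid
    rfl
  · rw [if_neg hpar] at hid
    rw [hb0 _ (by omega)] at hid
    exact absurd hid (by simp)

lemma gmap_append_bwords (α β β' : Seq3) (N : ℕ)
    (hb : ∀ k, k < N → β' k = β k)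
    (ha0 : ∀ k, N ≤ k → α k = none) (hb0 : ∀ k, N ≤ k → β k = none)
    (hfin : {k | β' k ≠ none}.Finite) :
    ∃ ds, (∀ l ∈ ds, l.1 = true) ∧ gmap α β' = gmap α β ++ ds := by
  obtain ⟨M, hM⟩ := bound_of_finite hfin
  refine ⟨_, ?_, gmap_concat α β α β' N M (fun _ _ => rfl) hb ha0 hb0
    (fun k hk => ha0 k (by omega)) (fun k hk => hM k (by omega))⟩
  intro l hl
  rw [fF, List.mem_filterMap] at hl
  obtain ⟨e, he, hid⟩ := hl
  rw [takeSeq, List.mem_ofFn] at he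
  obtain ⟨i, rfl⟩ := he
  simp only [id_eq, interleave] at hid
  by_cases hpar : (2*N + i.1) % 2 = 0
  · rw [if_pos hpar] at hid
    rw [ha0 _ (by omega)] at hid
    exact absurd hid (by simp)
  · rw [if_neg hpar] at hid
    rw [Option.map_eq_some_iff] at hid
    obtain ⟨v, _, rfl⟩ := hid
    rfl

lemma gmap_place_a (α β : Seq3) (cs : T22) (N : ℕ)
    (hc : ∀ l ∈ cs, l.1 = false)
    (ha0 : ∀ k, N ≤ k → α k = none) (hb0 : ∀ k, N ≤ k → β k = none) :
    gmap (fun k => if k < N then α k else (cs[k - N]?).map Prod.snd) β = gmap α β ++ cs := by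
  set α' : Seq3 := fun k => if k < N then α k else (cs[k - N]?).map Prod.snd with hα'
  rw [gmap_concat α β α' β N cs.length (fun k hk => if_pos hk) (fun _ _ => rfl) ha0 hb0
    (fun k hk => by
      simp only [hα', if_neg (by omega : ¬ k < N)]
      rw [List.getElem?_eq_none (by omega)]; rfl)
    (fun k hk => hb0 k (by omega))]
  congr 1
  apply fF_pairs cs (fun j => interleave α' β (2*N + j))
  intro i hi
  left
  constructor
  · have h1 : interleave α' β (2*N + 2*i) = some cs[i] := by
      rw [interleave, if_pos (by omega : (2*N + 2*i) % 2 = 0),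
        show (2*N + 2*i) / 2 = N + i by omega]
      have : α' (N + i) = some cs[i].2 := by
        simp only [hα', if_neg (by omega : ¬ N + i < N)]
        rw [show N + i - N = i by omega, List.getElem?_eq_getElem hi]
        rfl
      rw [this]
      have hfal := hc cs[i] (List.getElem_mem hi)
      simp only [Option.map_some]
      rw [show ((false, cs[i].2) : Letter) = cs[i] by rw [← hfal]]
    exact h1
  · have h2 : interleave α' β (2*N + (2*i+1)) = none := by
      rw [interleave, if_neg (by omega : ¬ (2*N + (2*i+1)) % 2 = 0),
        show (2*N + (2*i+1)) / 2 = N + i by omega]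
      rw [hb0 _ (by omega)]
      rfl
    exact h2

lemma gmap_place_b (α β : Seq3) (ds : T22) (N : ℕ)
    (hd : ∀ l ∈ ds, l.1 = true)
    (ha0 : ∀ k, N ≤ k → α k = none) (hb0 : ∀ k, N ≤ k → β k = none) :
    gmap α (fun k => if k < N then β k else (ds[k - N]?).map Prod.snd) = gmap α β ++ ds := by
  set β' : Seq3 := fun k => if k < N then β k else (ds[k - N]?).map Prod.snd with hβ'
  rw [gmap_concat α β α β' N ds.length (fun _ _ => rfl) (fun k hk => if_pos hk) ha0 hb0
    (fun k hk => ha0 k (by omega))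
    (fun k hk => by
      simp only [hβ', if_neg (by omega : ¬ k < N)]
      rw [List.getElem?_eq_none (by omega)]; rfl)]
  congr 1
  apply fF_pairs ds (fun j => interleave α β' (2*N + j))
  intro i hi
  right
  constructor
  · have h1 : interleave α β' (2*N + 2*i) = none := by
      rw [interleave, if_pos (by omega : (2*N + 2*i) % 2 = 0),
        show (2*N + 2*i) / 2 = N + i by omega]
      rw [ha0 _ (by omega)]
      rfl
    exact h1
  · have h2 : interleave α β' (2*N + (2*i+1)) = some ds[i] := by
      rw [interleave, if_neg (by omega : ¬ (2*N + (2*i+1)) % 2 = 0),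
        show (2*N + (2*i+1)) / 2 = N + i by omega]
      have : β' (N + i) = some ds[i].2 := by
        simp only [hβ', if_neg (by omega : ¬ N + i < N)]
        rw [show N + i - N = i by omega, List.getElem?_eq_getElem hi]
        rfl
      rw [this]
      have htru := hd ds[i] (List.getElem_mem hi)
      simp only [Option.map_some]
      rw [show ((true, ds[i].2) : Letter) = ds[i] by rw [← htru]]
    exact h2

def seqA (w : T22) : Seq3 := fun k => (w[k]?).bind (fun l => if l.1 = false then some l.2 else none)
def seqB (w : T22) : Seq3 := fun k => (w[k]?).bind (fun l => if l.1 = true then some l.2 else none)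

lemma seqA_none (w : T22) : ∀ k, w.length ≤ k → seqA w k = none := by
  intro k hk; rw [seqA, List.getElem?_eq_none hk]; rfl

lemma seqB_none (w : T22) : ∀ k, w.length ≤ k → seqB w k = none := by
  intro k hk; rw [seqB, List.getElem?_eq_none hk]; rfl

lemma seqA_finite (w : T22) : {k | seqA w k ≠ none}.Finite :=
  Set.Finite.subset (Set.finite_Iio w.length) (fun k hk => by
    by_contra h
    exact hk (seqA_none w k (by simpa using h)))

lemma seqB_finite (w : T22) : {k | seqB w k ≠ none}.Finite :=
  Set.Finite.subset (Set.finite_Iio w.length) (fun k hk => by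
    by_contra h
    exact hk (seqB_none w k (by simpa using h)))

lemma gmap_seqAB (w : T22) : gmap (seqA w) (seqB w) = w := by
  have hb : ∀ k, 2 * w.length ≤ k → interleave (seqA w) (seqB w) k = none :=
    interleave_eventually_none (seqA_none w) (seqB_none w)
  rw [gmap, squash_eq _ _ hb]
  apply fF_pairs w
  intro i hi
  have hA : seqA w i = if w[i].1 = false then some w[i].2 else none := by
    rw [seqA, List.getElem?_eq_getElem hi]; rfl
  have hB : seqB w i = if w[i].1 = true then some w[i].2 else none := by
    rw [seqB, List.getElem?_eq_getElem hi]; rfl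
  have e1 : interleave (seqA w) (seqB w) (2*i) = (seqA w i).map (fun v => ((false, v) : Letter)) := by
    rw [interleave, if_pos (by omega), show 2*i/2 = i by omega]
  have e2 : interleave (seqA w) (seqB w) (2*i+1) = (seqB w i).map (fun v => ((true, v) : Letter)) := by
    rw [interleave, if_neg (by omega), show (2*i+1)/2 = i by omega]
  rcases hbool : w[i].1 with _ | _
  · left
    rw [e1, e2, hA, hB, if_pos hbool, if_neg (by rw [hbool]; simp)]
    refine ⟨?_, rfl⟩
    simp only [Option.map_some]
    rw [show ((false, w[i].2) : Letter) = w[i] by rw [← hbool]]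
  · right
    rw [e1, e2, hA, hB, if_neg (by rw [hbool]; simp), if_pos hbool]
    refine ⟨rfl, ?_⟩
    simp only [Option.map_some]
    rw [show ((true, w[i].2) : Letter) = w[i] by rw [← hbool]]

end B

section C
open TopologicalSpace

lemma mkWom_finite (s : Seq3) (N : ℕ) (h : ∀ k, N ≤ k → s k = none) :
    {k | s k ≠ none}.Finite :=
  Set.Finite.subset (Set.finite_Iio N) (fun k hk => by
    by_contra hlt
    exact hk (h k (by simpa using hlt)))

def mkWom (s : Seq3) (N : ℕ) (h : ∀ k, N ≤ k → s k = none) : Wom :=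
  ⟨s, mkWom_finite s N h⟩

@[simp] lemma mkWom_val (s : Seq3) (N : ℕ) (h : ∀ k, N ≤ k → s k = none) :
    (mkWom s N h).1 = s := rfl

lemma mem_Uset_self (α : Wom) (k : ℕ) : α ∈ Uset α k :=
  ⟨rfl, fF_take_prefix_squash α.1 α.2 k⟩

lemma Uset_anti (α : Wom) {k k' : ℕ} (h : k ≤ k') : Uset α k' ⊆ Uset α k := by
  rintro β ⟨h1, h2⟩
  constructor
  · rw [takeSeq_eq_iff] at h1 ⊢
    exact fun i hi => h1 i (by omega)
  · exact (fF_take_prefix α.1 h).trans h2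

lemma Uset_trans {α β : Wom} {k : ℕ} (h : β ∈ Uset α k) : Uset β k ⊆ Uset α k := by
  rintro γ ⟨g1, g2⟩
  refine ⟨g1.trans h.1, ?_⟩
  rw [← h.1]
  exact g2

lemma U'0_mem_iff {α : Wom} {K : ℕ} {x : Wom × ℕ} :
    x ∈ U'set α K 0 ↔ x.1 ∈ Uset α K ∧ (x.2 = 0 ∨ K ≤ x.2) := by
  rw [U'set, if_pos rfl]
  simp only [Set.mem_union, Set.mem_prod, Set.mem_singleton_iff, Set.mem_setOf_eq]
  tauto

lemma mem_U'0 (γ : Wom) (K : ℕ) : (γ, 0) ∈ U'set γ K 0 :=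
  U'0_mem_iff.mpr ⟨mem_Uset_self γ K, Or.inl rfl⟩

lemma U'0_anti (γ : Wom) {K K' : ℕ} (h : K ≤ K') : U'set γ K' 0 ⊆ U'set γ K 0 := by
  intro x hx
  rw [U'0_mem_iff] at hx ⊢
  exact ⟨Uset_anti γ h hx.1, hx.2.imp id (fun h2 => le_trans h h2)⟩

lemma U'0_sub {γ α' : Wom} {k' : ℕ} (hm : γ ∈ Uset α' k') : U'set γ k' 0 ⊆ U'set α' k' 0 := by
  intro x hx
  rw [U'0_mem_iff] at hx ⊢
  exact ⟨Uset_trans hm hx.1, hx.2⟩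

lemma U'set_ne {α : Wom} {k n : ℕ} (hn : n ≠ 0) : U'set α k n = {(α, n)} := by
  rw [U'set, if_neg hn]

lemma isOpen_gen {X : Type} {G : Set (Set X)} {O : Set X}
    (h : ∀ p ∈ O, ∃ S, S ∈ G ∧ p ∈ S ∧ S ⊆ O) : GenerateOpen G O := by
  have hO : O = ⋃₀ {S | S ∈ G ∧ S ⊆ O} := by
    ext p
    constructor
    · intro hp
      obtain ⟨S, h1, h2, h3⟩ := h p hp
      exact ⟨S, ⟨h1, h3⟩, h2⟩
    · rintro ⟨S, ⟨_, h3⟩, hp⟩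
      exact h3 hp
  rw [hO]
  exact GenerateOpen.sUnion _ (fun S hS => GenerateOpen.basic S hS.1)

lemma continuous_to_gen {X Y : Type} (tX : TopologicalSpace X) (G : Set (Set Y)) (f : X → Y)
    (h : ∀ S ∈ G, tX.IsOpen (f ⁻¹' S)) :
    @Continuous X Y tX (TopologicalSpace.generateFrom G) f := by
  letI := tX
  rw [continuous_def]
  intro s hs
  replace hs : TopologicalSpace.GenerateOpen G s := hs
  induction hs with
  | basic S hS => exact h S hS
  | univ => rw [Set.preimage_univ]; exact isOpen_univ
  | inter s t _ _ ih1 ih2 => rw [Set.preimage_inter]; exact ih1.inter ih2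
  | sUnion 𝒮 _ ih => rw [Set.preimage_sUnion]; exact isOpen_biUnion ih

lemma TX_nbhd0 {O : Set (Wom × ℕ)}
    (h : GenerateOpen {S | ∃ α k n, S = U'set α k n} O) :
    ∀ γ : Wom, (γ, 0) ∈ O → ∃ K, 0 < K ∧ U'set γ K 0 ⊆ O := by
  induction h with
  | basic S hS =>
    intro γ hm
    obtain ⟨α', k', n', rfl⟩ := hS
    by_cases hn : n' = 0
    · subst hn
      have hγ : γ ∈ Uset α' k' := (U'0_mem_iff.mp hm).1
      exact ⟨max k' 1, by omega, (U'0_anti γ (le_max_left k' 1)).trans (U'0_sub hγ)⟩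
    · rw [U'set_ne hn] at hm
      replace hm : ((γ, 0) : Wom × ℕ) = (α', n') := hm
      exact absurd (congrArg Prod.snd hm).symm hn
  | univ => intro γ _; exact ⟨1, one_pos, fun _ _ => Set.mem_univ _⟩
  | inter O1 O2 _ _ ih1 ih2 =>
    intro γ hm
    obtain ⟨K1, p1, s1⟩ := ih1 γ hm.1
    obtain ⟨K2, p2, s2⟩ := ih2 γ hm.2
    exact ⟨max K1 K2, by omega, fun x hx =>
      ⟨s1 (U'0_anti γ (le_max_left K1 K2) hx), s2 (U'0_anti γ (le_max_right K1 K2) hx)⟩⟩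
  | sUnion 𝒮 _ ih =>
    intro γ hm
    obtain ⟨t, ht, hγt⟩ := hm
    obtain ⟨K, pK, sK⟩ := ih t ht γ hγt
    exact ⟨K, pK, sK.trans (Set.subset_sUnion_of_mem ht)⟩

lemma Tom_nbhd {O : Set Wom} (h : GenerateOpen {S | ∃ α k, 0 < k ∧ S = Uset α k} O) :
    ∀ β ∈ O, ∃ K, 0 < K ∧ Uset β K ⊆ O := by
  induction h with
  | basic S hS =>
    intro β hm
    obtain ⟨α', k', hk', rfl⟩ := hS
    exact ⟨k', hk', Uset_trans hm⟩
  | univ => intro β _; exact ⟨1, one_pos, fun _ _ => Set.mem_univ _⟩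
  | inter O1 O2 _ _ ih1 ih2 =>
    intro β hm
    obtain ⟨K1, p1, s1⟩ := ih1 β hm.1
    obtain ⟨K2, p2, s2⟩ := ih2 β hm.2
    exact ⟨max K1 K2, by omega, fun x hx =>
      ⟨s1 (Uset_anti β (le_max_left K1 K2) hx), s2 (Uset_anti β (le_max_right K1 K2) hx)⟩⟩
  | sUnion 𝒮 _ ih =>
    intro β hm
    obtain ⟨t, ht, hβt⟩ := hm
    obtain ⟨K, pK, sK⟩ := ih t ht β hβt
    exact ⟨K, pK, sK.trans (Set.subset_sUnion_of_mem ht)⟩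

lemma horiz_nbhd {X Y : Type} {t : TopologicalSpace X} {O : Set (X × Y)}
    (h : GenerateOpen {S | ∃ (U : Set X) (y : Y), t.IsOpen U ∧ S = U ×ˢ ({y} : Set Y)} O) :
    ∀ (x : X) (y : Y), (x, y) ∈ O → ∃ U, t.IsOpen U ∧ x ∈ U ∧ U ×ˢ ({y} : Set Y) ⊆ O := by
  induction h with
  | basic S hS =>
    intro x y hm
    obtain ⟨U, y', hU, rfl⟩ := hS
    obtain ⟨hm1, hm2⟩ := hm
    have hy : y = y' := hm2
    subst hy
    exact ⟨U, hU, hm1, subset_rfl⟩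
  | univ => intro x y _; exact ⟨Set.univ, t.isOpen_univ, Set.mem_univ _, fun _ _ => Set.mem_univ _⟩
  | inter O1 O2 _ _ ih1 ih2 =>
    intro x y hm
    obtain ⟨U1, hU1, m1, s1⟩ := ih1 x y hm.1
    obtain ⟨U2, hU2, m2, s2⟩ := ih2 x y hm.2
    exact ⟨U1 ∩ U2, t.isOpen_inter _ _ hU1 hU2, ⟨m1, m2⟩,
      fun p hp => ⟨s1 ⟨hp.1.1, hp.2⟩, s2 ⟨hp.1.2, hp.2⟩⟩⟩
  | sUnion 𝒮 _ ih =>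
    intro x y hm
    obtain ⟨s, hs, hms⟩ := hm
    obtain ⟨U, hU, m1, s1⟩ := ih s hs x y hms
    exact ⟨U, hU, m1, s1.trans (Set.subset_sUnion_of_mem hs)⟩

lemma vert_nbhd {X Y : Type} {t : TopologicalSpace Y} {O : Set (X × Y)}
    (h : GenerateOpen {S | ∃ (x : X) (U : Set Y), t.IsOpen U ∧ S = ({x} : Set X) ×ˢ U} O) :
    ∀ (x : X) (y : Y), (x, y) ∈ O → ∃ U, t.IsOpen U ∧ y ∈ U ∧ ({x} : Set X) ×ˢ U ⊆ O := by
  induction h with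
  | basic S hS =>
    intro x y hm
    obtain ⟨x', U, hU, rfl⟩ := hS
    obtain ⟨hm1, hm2⟩ := hm
    have hx : x = x' := hm1
    subst hx
    exact ⟨U, hU, hm2, subset_rfl⟩
  | univ => intro x y _; exact ⟨Set.univ, t.isOpen_univ, Set.mem_univ _, fun _ _ => Set.mem_univ _⟩
  | inter O1 O2 _ _ ih1 ih2 =>
    intro x y hm
    obtain ⟨U1, hU1, m1, s1⟩ := ih1 x y hm.1
    obtain ⟨U2, hU2, m2, s2⟩ := ih2 x y hm.2
    exact ⟨U1 ∩ U2, t.isOpen_inter _ _ hU1 hU2, ⟨m1, m2⟩,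
      fun p hp => ⟨s1 ⟨hp.1, hp.2.1⟩, s2 ⟨hp.1, hp.2.2⟩⟩⟩
  | sUnion 𝒮 _ ih =>
    intro x y hm
    obtain ⟨s, hs, hms⟩ := hm
    obtain ⟨U, hU, m1, s1⟩ := ih s hs x y hms
    exact ⟨U, hU, m1, s1.trans (Set.subset_sUnion_of_mem hs)⟩

end C

section D

lemma R1'_appA {w cs : T22} (hc : ∀ l ∈ cs, l.1 = false) :
    R1' (w, none) (w ++ cs, none) :=
  Relation.ReflTransGen.single (Or.inl ⟨w, w ++ cs, ⟨cs, hc, rfl⟩, rfl, rfl⟩)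

lemma R1'_appA_root {w cs : T22} (hc : ∀ l ∈ cs, l.1 = false) :
    R1' (w, none) (w ++ cs, some ([] : T2W)) :=
  Relation.ReflTransGen.tail (R1'_appA hc) (Or.inr ⟨w ++ cs, rfl, rfl⟩)

lemma R2'_appB {w ds : T22} (hd : ∀ l ∈ ds, l.1 = true) :
    R2' (w, none) (w ++ ds, none) :=
  Relation.ReflTransGen.single (Or.inl ⟨w, w ++ ds, ⟨ds, hd, rfl⟩, rfl, rfl⟩)

lemma R2'_pref {w : T22} {b b' : T2W} (h : b <+: b') :
    R2' (w, some b) (w, some b') :=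
  Relation.ReflTransGen.single (Or.inr ⟨w, b, b', h, rfl, rfl⟩)

lemma R1'_inv {x y : W222} (h : R1' x y) :
    y = x ∨ ∃ w cs, (∀ l ∈ cs, l.1 = false) ∧ x = (w, none) ∧
      (y = (w ++ cs, none) ∨ y = (w ++ cs, some ([] : T2W))) := by
  have h' : Relation.ReflTransGen R1'gen x y := h
  clear h
  induction h' with
  | refl => exact Or.inl rfl
  | tail h1 h2 ih =>
    unfold R1'gen at h2
    rcases ih with rfl | ⟨w, cs, hc, rfl, hy⟩
    · rcases h2 with ⟨a, a', ⟨d, hd, rfl⟩, heq, rfl⟩ | ⟨a, heq, rfl⟩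
      · exact Or.inr ⟨a, d, hd, heq, Or.inl rfl⟩
      · exact Or.inr ⟨a, [], by simp, heq, Or.inr (by simp)⟩
    · rcases hy with rfl | rfl
      · rcases h2 with ⟨a, a', ⟨d, hd, rfl⟩, heq, rfl⟩ | ⟨a, heq, rfl⟩
        · have ha : a = w ++ cs := (congrArg Prod.fst heq).symm
          subst ha
          refine Or.inr ⟨w, cs ++ d, ?_, rfl, Or.inl (by rw [List.append_assoc])⟩
          intro l hl
          rcases List.mem_append.mp hl with h | h
          exacts [hc l h, hd l h]
        · have ha : a = w ++ cs := (congrArg Prod.fst heq).symm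
          subst ha
          exact Or.inr ⟨w, cs, hc, rfl, Or.inr rfl⟩
      · rcases h2 with ⟨a, a', _, heq, _⟩ | ⟨a, heq, _⟩ <;>
          exact absurd (congrArg Prod.snd heq) (by simp)

lemma R2'_inv {x y : W222} (h : R2' x y) :
    (∃ w ds, (∀ l ∈ ds, l.1 = true) ∧ x = (w, none) ∧ y = (w ++ ds, none)) ∨
    (∃ w b b', b <+: b' ∧ x = (w, some b) ∧ y = (w, some b')) := by
  have h' : Relation.ReflTransGen R2'gen x y := h
  clear h
  induction h' with
  | refl =>
    rcases x with ⟨w, _ | b⟩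
    · exact Or.inl ⟨w, [], by simp, rfl, by simp⟩
    · exact Or.inr ⟨w, b, b, List.prefix_refl b, rfl, rfl⟩
  | tail h1 h2 ih =>
    unfold R2'gen at h2
    rcases ih with ⟨w, ds, hd, rfl, rfl⟩ | ⟨w, b, b', hpre, rfl, rfl⟩
    · rcases h2 with ⟨a, a', ⟨e, he, rfl⟩, heq, rfl⟩ | ⟨a, b1, b2, _, heq, _⟩
      · have ha : a = w ++ ds := (congrArg Prod.fst heq).symm
        subst ha
        refine Or.inl ⟨w, ds ++ e, ?_, rfl, by rw [List.append_assoc]⟩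
        intro l hl
        rcases List.mem_append.mp hl with h | h
        exacts [hd l h, he l h]
      · exact absurd (congrArg Prod.snd heq) (by simp)
    · rcases h2 with ⟨a, a', _, heq, _⟩ | ⟨a, b1, b2, hpre2, heq, rfl⟩
      · exact absurd (congrArg Prod.snd heq) (by simp)
      · have ha : w = a := congrArg Prod.fst heq
        subst ha
        have hb : b' = b1 := Option.some.inj (congrArg Prod.snd heq)
        subst hb
        exact Or.inr ⟨w, b, b2, hpre.trans hpre2, rfl, rfl⟩

lemma fXY_zero (α β : Wom) : fXY ((α, 0), β) = (gmap α.1 β.1, none) := by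
  simp [fXY]

lemma fXY_pos (α β : Wom) {n : ℕ} (hn : n ≠ 0) :
    fXY ((α, n), β) =
      (gmap (truncSeq α.1 n) (truncSeq β.1 n), some (squash (shiftSeq β.1 n))) := by
  rw [fXY, if_neg hn]

end D

/-- the map f is a p-morphism from the bitopological product
𝔛 × 𝒴 onto Top₂(𝕋₂,₂₊₂). -/
theorem fXY_pmorphism :
    Function.Surjective fXY ∧
    @Continuous _ _ (horiz TX) (alexandrov R1') fXY ∧
    @IsOpenMap _ _ (horiz TX) (alexandrov R1') fXY ∧
    @Continuous _ _ (vert Tom) (alexandrov R2') fXY ∧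
    @IsOpenMap _ _ (vert Tom) (alexandrov R2') fXY := by
  -- surjectivity
  have hsurj : Function.Surjective fXY := by
    rintro ⟨w, o⟩
    rcases o with _ | b
    · refine ⟨((⟨seqA w, seqA_finite w⟩, 0), ⟨seqB w, seqB_finite w⟩), ?_⟩
      erw [fXY_zero]
      show (gmap (seqA w) (seqB w), none) = _
      rw [gmap_seqAB]
    · set n := w.length + 1 with hn
      set βf : Seq3 := fun k => if k < n then seqB w k else b[k - n]? with hβf
      have hβf0 : ∀ k, n + b.length ≤ k → βf k = none := fun k hk => by
        simp only [hβf]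
        rw [if_neg (by omega), List.getElem?_eq_none (by omega)]
      refine ⟨((⟨seqA w, seqA_finite w⟩, n), mkWom βf (n + b.length) hβf0), ?_⟩
      erw [fXY_pos _ _ (by omega : n ≠ 0)]
      have h1 : truncSeq (seqA w) n = seqA w := by
        funext k
        show (if k < n then seqA w k else none) = seqA w k
        by_cases hk : k < n
        · rw [if_pos hk]
        · rw [if_neg hk, seqA_none w k (by omega)]
      have h2 : truncSeq βf n = seqB w := by
        funext k
        show (if k < n then βf k else none) = seqB w k
        by_cases hk : k < n
        · rw [if_pos hk]; simp only [hβf]; rw [if_pos hk]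
        · rw [if_neg hk, seqB_none w k (by omega)]
      have h3 : shiftSeq βf n = fun k => b[k]? := by
        funext k
        show βf (n + k) = b[k]?
        simp only [hβf]
        rw [if_neg (by omega), show n + k - n = k by omega]
      show (gmap (truncSeq (seqA w) n) (truncSeq βf n), some (squash (shiftSeq βf n))) = _
      rw [h1, h2, h3, gmap_seqAB, squash_list]
  -- horizontal forth condition
  have forth1 : ∀ (α : Wom) (n : ℕ) (β : Wom), ∃ B : Set ((Wom × ℕ) × Wom),
      B ∈ {S | ∃ (U : Set (Wom × ℕ)) (y : Wom), TX.IsOpen U ∧ S = U ×ˢ ({y} : Set Wom)} ∧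
      ((α, n), β) ∈ B ∧ ∀ q ∈ B, R1' (fXY ((α, n), β)) (fXY q) := by
    intro α n β
    by_cases hn : n = 0
    · subst hn
      obtain ⟨Na, hNa⟩ := bound_of_finite α.2
      obtain ⟨Nb, hNb⟩ := bound_of_finite β.2
      set K := max Na Nb + 1 with hK
      have hTXopen : TX.IsOpen (U'set α K 0) :=
        TopologicalSpace.GenerateOpen.basic _ ⟨α, K, 0, rfl⟩
      refine ⟨U'set α K 0 ×ˢ ({β} : Set Wom),
        ⟨U'set α K 0, β, hTXopen, rfl⟩, ⟨mem_U'0 α K, rfl⟩, ?_⟩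
      rintro ⟨⟨α', m⟩, β'⟩ ⟨hq1, hq2⟩
      have hβ' : β' = β := hq2
      rw [hβ']
      simp only [U'0_mem_iff] at hq1
      obtain ⟨hUm, hm⟩ := hq1
      have hagree : ∀ k, k < K → α'.1 k = α.1 k := (takeSeq_eq_iff _ _ K).mp hUm.1
      have hα0 : ∀ k, K ≤ k → α.1 k = none := fun k hk => hNa k (by omega)
      have hβ0 : ∀ k, K ≤ k → β.1 k = none := fun k hk => hNb k (by omega)
      rw [fXY_zero]
      rcases hm with rfl | hm
      · rw [fXY_zero]
        obtain ⟨cs, hcs, hgm⟩ := gmap_append_awords α.1 β.1 α'.1 K hagree hα0 hβ0 α'.2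
        rw [hgm]
        exact R1'_appA hcs
      · rw [fXY_pos _ _ (by omega : m ≠ 0)]
        have ht : truncSeq β.1 m = β.1 := by
          funext k
          show (if k < m then β.1 k else none) = β.1 k
          by_cases hk : k < m
          · rw [if_pos hk]
          · rw [if_neg hk, hβ0 k (by omega)]
        have hsq : squash (shiftSeq β.1 m) = [] :=
          squash_none _ (fun k => hβ0 (m + k) (by omega))
        have hagree' : ∀ k, k < K → truncSeq α'.1 m k = α.1 k := by
          intro k hk
          show (if k < m then α'.1 k else none) = α.1 k
          rw [if_pos (by omega), hagree k hk]
        have hfin' : {k | truncSeq α'.1 m k ≠ none}.Finite :=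
          mkWom_finite _ m (fun k hk => by
            show (if k < m then α'.1 k else none) = none
            rw [if_neg (by omega)])
        obtain ⟨cs, hcs, hgm⟩ :=
          gmap_append_awords α.1 β.1 (truncSeq α'.1 m) K hagree' hα0 hβ0 hfin'
        rw [ht, hsq, hgm]
        exact R1'_appA_root hcs
    · have hTXopen : TX.IsOpen (U'set α 1 n) :=
        TopologicalSpace.GenerateOpen.basic _ ⟨α, 1, n, rfl⟩
      refine ⟨U'set α 1 n ×ˢ ({β} : Set Wom),
        ⟨U'set α 1 n, β, hTXopen, rfl⟩,
        ⟨by rw [U'set_ne hn]; exact rfl, rfl⟩, ?_⟩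
      rintro ⟨⟨α', m⟩, β'⟩ ⟨hq1, hq2⟩
      rw [U'set_ne hn] at hq1
      have heq : ((α', m) : Wom × ℕ) = (α, n) := hq1
      have hβ' : β' = β := hq2
      rw [heq, hβ']
      exact Relation.ReflTransGen.refl
  -- vertical forth condition
  have forth2 : ∀ (α : Wom) (n : ℕ) (β : Wom), ∃ B : Set ((Wom × ℕ) × Wom),
      B ∈ {S | ∃ (x : Wom × ℕ) (U : Set Wom), Tom.IsOpen U ∧ S = ({x} : Set (Wom × ℕ)) ×ˢ U} ∧
      ((α, n), β) ∈ B ∧ ∀ q ∈ B, R2' (fXY ((α, n), β)) (fXY q) := by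
    intro α n β
    obtain ⟨Na, hNa⟩ := bound_of_finite α.2
    obtain ⟨Nb, hNb⟩ := bound_of_finite β.2
    set K := max (max Na Nb) n + 1 with hK
    have hTom : Tom.IsOpen (Uset β K) :=
      TopologicalSpace.GenerateOpen.basic _ ⟨β, K, by omega, rfl⟩
    refine ⟨({((α, n) : Wom × ℕ)} : Set (Wom × ℕ)) ×ˢ Uset β K,
      ⟨(α, n), Uset β K, hTom, rfl⟩, ⟨rfl, mem_Uset_self β K⟩, ?_⟩
    rintro ⟨⟨α', m⟩, β'⟩ ⟨hq1, hq2⟩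
    have heq : ((α', m) : Wom × ℕ) = (α, n) := hq1
    rw [heq]
    obtain ⟨ht, hpre⟩ := hq2
    have hagree : ∀ k, k < K → β'.1 k = β.1 k := (takeSeq_eq_iff _ _ K).mp ht
    by_cases hn : n = 0
    · subst hn
      rw [fXY_zero, fXY_zero]
      obtain ⟨ds, hds, hgm⟩ := gmap_append_bwords α.1 β.1 β'.1 K hagree
        (fun k hk => hNa k (by omega)) (fun k hk => hNb k (by omega)) β'.2
      rw [hgm]
      exact R2'_appB hds
    · rw [fXY_pos _ _ hn, fXY_pos _ _ hn]
      have htr : truncSeq β'.1 n = truncSeq β.1 n := by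
        funext k
        show (if k < n then β'.1 k else none) = (if k < n then β.1 k else none)
        by_cases hk : k < n
        · rw [if_pos hk, if_pos hk, hagree k (by omega)]
        · rw [if_neg hk, if_neg hk]
      rw [htr]
      have hKb : ∀ k, K ≤ k → β.1 k = none := fun k hk => hNb k (by omega)
      have hsq : squash β.1 <+: squash β'.1 := by
        rw [squash_eq β.1 K hKb]
        exact hpre
      have hsplit : squash β.1 = fF (takeSeq β.1 n) ++ squash (shiftSeq β.1 n) :=
        squash_split β.1 β.2 n
      have hsplit' : squash β'.1 = fF (takeSeq β'.1 n) ++ squash (shiftSeq β'.1 n) :=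
        squash_split β'.1 β'.2 n
      have htn : takeSeq β'.1 n = takeSeq β.1 n :=
        (takeSeq_eq_iff _ _ n).mpr (fun i hi => hagree i (by omega))
      have hpre2 : squash (shiftSeq β.1 n) <+: squash (shiftSeq β'.1 n) := by
        rw [hsplit, hsplit', htn] at hsq
        obtain ⟨r, hr⟩ := hsq
        rw [List.append_assoc] at hr
        exact ⟨r, List.append_cancel_left hr⟩
      exact R2'_pref hpre2
  refine ⟨hsurj, ?_, ?_, ?_, ?_⟩
  · -- continuity, horizontal
    apply continuous_to_gen (horiz TX) _ fXY
    rintro S ⟨x, rfl⟩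
    show TopologicalSpace.GenerateOpen _ (fXY ⁻¹' {t | R1' x t})
    apply isOpen_gen
    rintro ⟨⟨α, n⟩, β⟩ hp
    obtain ⟨B, hBmem, hpB, hforth⟩ := forth1 α n β
    exact ⟨B, hBmem, hpB,
      fun q hq => Relation.ReflTransGen.trans hp (hforth q hq)⟩
  · -- open map, horizontal
    intro O hO
    show TopologicalSpace.GenerateOpen {S | ∃ x, S = {t | R1' x t}} (fXY '' O)
    apply isOpen_gen
    rintro u ⟨p, hpO, rfl⟩
    refine ⟨{t | R1' (fXY p) t}, ⟨fXY p, rfl⟩, Relation.ReflTransGen.refl, ?_⟩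
    intro u hu
    obtain ⟨⟨α, n⟩, β⟩ := p
    by_cases hn : n = 0
    · subst hn
      rw [fXY_zero] at hu
      rcases R1'_inv hu with rfl | ⟨w, cs, hc, heq, hy⟩
      · exact ⟨((α, 0), β), hpO, fXY_zero α β⟩
      · have hw : w = gmap α.1 β.1 := (congrArg Prod.fst heq).symm
        subst hw
        obtain ⟨U, hU, hxU, hsub⟩ := horiz_nbhd hO (α, 0) β hpO
        obtain ⟨K, hKpos, hKsub⟩ := TX_nbhd0 hU α hxU
        obtain ⟨Na, hNa⟩ := bound_of_finite α.2
        obtain ⟨Nb, hNb⟩ := bound_of_finite β.2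
        set N := max K (max Na Nb) + 1 with hN
        set αf : Seq3 := fun k => if k < N then α.1 k else (cs[k - N]?).map Prod.snd with hαf
        have hαf0 : ∀ k, N + cs.length ≤ k → αf k = none := fun k hk => by
          simp only [hαf]
          rw [if_neg (by omega), List.getElem?_eq_none (by omega)]
          rfl
        set α' : Wom := mkWom αf (N + cs.length) hαf0 with hα'
        have hval : α'.1 = αf := rfl
        have hmemU : α' ∈ Uset α K := by
          have hagr : takeSeq α'.1 K = takeSeq α.1 K :=
            (takeSeq_eq_iff _ _ K).mpr (fun i hi => by
              show αf i = α.1 i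
              simp only [hαf]
              rw [if_pos (by omega)])
          refine ⟨hagr, ?_⟩
          rw [← hagr]
          exact fF_take_prefix_squash α'.1 α'.2 K
        have hgm : gmap αf β.1 = gmap α.1 β.1 ++ cs := by
          rw [hαf]
          exact gmap_place_a α.1 β.1 cs N hc
            (fun k hk => hNa k (by omega)) (fun k hk => hNb k (by omega))
        rcases hy with rfl | rfl
        · refine ⟨((α', 0), β), hsub ⟨hKsub (U'0_mem_iff.mpr ⟨hmemU, Or.inl rfl⟩), rfl⟩, ?_⟩
          rw [fXY_zero, hval, hgm]
        · refine ⟨((α', N + cs.length), β),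
            hsub ⟨hKsub (U'0_mem_iff.mpr ⟨hmemU, Or.inr (show K ≤ N + cs.length by omega)⟩), rfl⟩, ?_⟩
          rw [fXY_pos _ _ (by omega : N + cs.length ≠ 0)]
          have h1 : truncSeq α'.1 (N + cs.length) = αf := by
            funext k
            show (if k < N + cs.length then αf k else none) = αf k
            by_cases hk : k < N + cs.length
            · rw [if_pos hk]
            · rw [if_neg hk, hαf0 k (by omega)]
          have h2 : truncSeq β.1 (N + cs.length) = β.1 := by
            funext k
            show (if k < N + cs.length then β.1 k else none) = β.1 k
            by_cases hk : k < N + cs.length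
            · rw [if_pos hk]
            · rw [if_neg hk, hNb k (by omega)]
          have h3 : squash (shiftSeq β.1 (N + cs.length)) = [] :=
            squash_none _ (fun k => hNb (N + cs.length + k) (by omega))
          rw [h1, h2, h3, hgm]
    · rw [fXY_pos _ _ hn] at hu
      rcases R1'_inv hu with rfl | ⟨w, cs, hc, heq, hy⟩
      · exact ⟨((α, n), β), hpO, fXY_pos α β hn⟩
      · exact absurd (congrArg Prod.snd heq) (by simp)
  · -- continuity, vertical
    apply continuous_to_gen (vert Tom) _ fXY
    rintro S ⟨x, rfl⟩
    show TopologicalSpace.GenerateOpen _ (fXY ⁻¹' {t | R2' x t})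
    apply isOpen_gen
    rintro ⟨⟨α, n⟩, β⟩ hp
    obtain ⟨B, hBmem, hpB, hforth⟩ := forth2 α n β
    exact ⟨B, hBmem, hpB,
      fun q hq => Relation.ReflTransGen.trans hp (hforth q hq)⟩
  · -- open map, vertical
    intro O hO
    show TopologicalSpace.GenerateOpen {S | ∃ x, S = {t | R2' x t}} (fXY '' O)
    apply isOpen_gen
    rintro u ⟨p, hpO, rfl⟩
    refine ⟨{t | R2' (fXY p) t}, ⟨fXY p, rfl⟩, Relation.ReflTransGen.refl, ?_⟩
    intro u hu
    obtain ⟨⟨α, n⟩, β⟩ := p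
    obtain ⟨V, hV, hyV, hsub⟩ := vert_nbhd hO (α, n) β hpO
    obtain ⟨K, hKpos, hKsub⟩ := Tom_nbhd hV β hyV
    obtain ⟨Na, hNa⟩ := bound_of_finite α.2
    obtain ⟨Nb, hNb⟩ := bound_of_finite β.2
    by_cases hn : n = 0
    · subst hn
      rw [fXY_zero] at hu
      rcases R2'_inv hu with ⟨w, ds, hd, heq, rfl⟩ | ⟨w, b, b', _, heq, _⟩
      · have hw : w = gmap α.1 β.1 := (congrArg Prod.fst heq).symm
        subst hw
        set N := max K (max Na Nb) + 1 with hN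
        set βf : Seq3 := fun k => if k < N then β.1 k else (ds[k - N]?).map Prod.snd with hβf
        have hβf0 : ∀ k, N + ds.length ≤ k → βf k = none := fun k hk => by
          simp only [hβf]
          rw [if_neg (by omega), List.getElem?_eq_none (by omega)]
          rfl
        set β' : Wom := mkWom βf (N + ds.length) hβf0 with hβ'
        have hval : β'.1 = βf := rfl
        have hmemU : β' ∈ Uset β K := by
          have hagr : takeSeq β'.1 K = takeSeq β.1 K :=
            (takeSeq_eq_iff _ _ K).mpr (fun i hi => by
              show βf i = β.1 i
              simp only [hβf]
              rw [if_pos (by omega)])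
          refine ⟨hagr, ?_⟩
          rw [← hagr]
          exact fF_take_prefix_squash β'.1 β'.2 K
        refine ⟨((α, 0), β'), hsub ⟨rfl, hKsub hmemU⟩, ?_⟩
        rw [fXY_zero, hval]
        have hgm : gmap α.1 βf = gmap α.1 β.1 ++ ds := by
          rw [hβf]
          exact gmap_place_b α.1 β.1 ds N hd
            (fun k hk => hNa k (by omega)) (fun k hk => hNb k (by omega))
        rw [hgm]
      · exact absurd (congrArg Prod.snd heq) (by simp)
    · rw [fXY_pos _ _ hn] at hu
      rcases R2'_inv hu with ⟨w, ds, hd, heq, rfl⟩ | ⟨w, b, b', hpre, heq, rfl⟩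
      · exact absurd (congrArg Prod.snd heq) (by simp)
      · have hw : w = gmap (truncSeq α.1 n) (truncSeq β.1 n) := (congrArg Prod.fst heq).symm
        have hb : b = squash (shiftSeq β.1 n) :=
          (Option.some.inj (congrArg Prod.snd heq)).symm
        subst hw
        obtain ⟨es, hes⟩ := hpre
        set N := max K (max n Nb) + 1 with hN
        set βf : Seq3 := fun k => if k < N then β.1 k else es[k - N]? with hβf
        have hβf0 : ∀ k, N + es.length ≤ k → βf k = none := fun k hk => by
          simp only [hβf]
          rw [if_neg (by omega)]
          exact List.getElem?_eq_none (by omega)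
        set β' : Wom := mkWom βf (N + es.length) hβf0 with hβ'
        have hval : β'.1 = βf := rfl
        have hmemU : β' ∈ Uset β K := by
          have hagr : takeSeq β'.1 K = takeSeq β.1 K :=
            (takeSeq_eq_iff _ _ K).mpr (fun i hi => by
              show βf i = β.1 i
              simp only [hβf]
              rw [if_pos (by omega)])
          refine ⟨hagr, ?_⟩
          rw [← hagr]
          exact fF_take_prefix_squash β'.1 β'.2 K
        refine ⟨((α, n), β'), hsub ⟨rfl, hKsub hmemU⟩, ?_⟩
        rw [fXY_pos _ _ hn]
        have h1 : truncSeq β'.1 n = truncSeq β.1 n := by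
          funext k
          show (if k < n then βf k else none) = (if k < n then β.1 k else none)
          by_cases hk : k < n
          · rw [if_pos hk, if_pos hk]
            simp only [hβf]
            rw [if_pos (by omega)]
          · rw [if_neg hk, if_neg hk]
        have h2 : squash (shiftSeq βf n) = b ++ es := by
          have hfin : {k | shiftSeq βf n k ≠ none}.Finite :=
            mkWom_finite _ (N + es.length) (fun k hk => hβf0 (n + k) (by omega))
          rw [squash_split (shiftSeq βf n) hfin (N - n)]
          congr 1
          · have he : takeSeq (shiftSeq βf n) (N - n) = takeSeq (shiftSeq β.1 n) (N - n) :=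
              (takeSeq_eq_iff _ _ _).mpr (fun i hi => by
                show βf (n + i) = β.1 (n + i)
                simp only [hβf]
                rw [if_pos (by omega)])
            rw [he, hb, squash_eq (shiftSeq β.1 n) (N - n)
              (fun k hk => hNb (n + k) (by omega))]
          · have he : shiftSeq (shiftSeq βf n) (N - n) = fun k => es[k]? := by
              funext k
              show βf (n + ((N - n) + k)) = es[k]?
              rw [show n + ((N - n) + k) = N + k by omega]
              simp only [hβf]
              rw [if_neg (by omega), show N + k - N = k by omega]
            rw [he, squash_list]
        rw [h1, hval, h2, hes]
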